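/- Let 𝔮 be a prime of the quotient graph of groups 𝕏 = Y//G with representative Q, and let f(𝔮) be the order of the Frobenius element F(Q) in G. Then every prime 𝔭 of Y lying over 𝔮 has residual degree exactly f(𝔮), i.e., π(P) = Q^{f(𝔮)} for any primitive path P representing 𝔭, and hence ℓ(𝔭) = f(𝔮)·ℓ(𝔮). -/
import Mathlib


structure LegGraph where
  V : Type
  H : Type
  [fV : Fintype V]
  [fH : Fintype H]
  [dV : DecidableEq V]
  [dH : DecidableEq H]
  r : H → V
  bar : H → H
  bar_bar : ∀ h, bar (bar h) = h

attribute [instance] LegGraph.fV LegGraph.fH LegGraph.dV LegGraph.dH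

namespace LegGraph

def IsClosedPath (X : LegGraph) {n : ℕ} (h : ZMod n → X.H) : Prop :=
  ∀ j, X.r (h (j + 1)) = X.r (X.bar (h j))

def IsReducedPath (X : LegGraph) {n : ℕ} (h : ZMod n → X.H) : Prop :=
  ∀ j, h (j + 1) ≠ X.bar (h j)

def HasPeriod (X : LegGraph) {n : ℕ} (h : ZMod n → X.H) (d : ℕ) : Prop :=
  ∀ j, h (j + (d : ZMod n)) = h j

def IsPrimitive (X : LegGraph) {n : ℕ} (h : ZMod n → X.H) : Prop :=
  ∀ d : ℕ, 0 < d → d ∣ n → X.HasPeriod h d → d = n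

end LegGraph

/-- An edge-free Galois covering of graphs with legs: a group `G` acting on a finite
graph `Y`, freely on half-edges, together with the quotient graph `X = Y/G`, a lifted
spanning tree (recorded via the vertex section `vT`), a choice of identity sheet
(recorded via the half-edge section `sec`) and the Frobenius elements `F(h)`, as in
the construction of the quotient graph of groups `𝕏 = Y ⫽ G`. -/
structure EdgeFreeCover where
  Y : LegGraph
  G : Type
  [grpG : Group G]
  [finG : Fintype G]
  [decG : DecidableEq G]
  act : G → Y.H → Y.H
  actV : G → Y.V → Y.V
  act_one : ∀ h, act 1 h = h
  act_mul : ∀ g g' h, act (g * g') h = act g (act g' h)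
  actV_one : ∀ v, actV 1 v = v
  actV_mul : ∀ g g' v, actV (g * g') v = actV g (actV g' v)
  act_r : ∀ g h, Y.r (act g h) = actV g (Y.r h)
  act_bar : ∀ g h, Y.bar (act g h) = act g (Y.bar h)
  free : ∀ g h, act g h = h → g = 1
  X : LegGraph
  πV : Y.V → X.V
  πH : Y.H → X.H
  πV_surj : Function.Surjective πV
  πH_r : ∀ f, X.r (πH f) = πV (Y.r f)
  πH_bar : ∀ f, X.bar (πH f) = πH (Y.bar f)
  πH_eq : ∀ f f', πH f = πH f' ↔ ∃ g, act g f = f'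
  πV_eq : ∀ v v', πV v = πV v' ↔ ∃ g, actV g v = v'
  vT : X.V → Y.V
  vT_sec : ∀ v, πV (vT v) = v
  sec : X.H → Y.H
  sec_sec : ∀ h, πH (sec h) = h
  sec_root : ∀ h, Y.r (sec h) = vT (X.r h)
  F : X.H → G
  F_bar : ∀ h, F (X.bar h) = (F h)⁻¹
  F_spec : ∀ h, act (F h) (sec (X.bar h)) = Y.bar (sec h)

attribute [instance] EdgeFreeCover.grpG EdgeFreeCover.finG EdgeFreeCover.decG

namespace EdgeFreeCover

variable (E : EdgeFreeCover)

/-- The sheet number `N(f)` of a half-edge `f` of `Y`: the unique `g ∈ G` with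
`g · (π f)^S = f`. -/
noncomputable def N (f : E.Y.H) : E.G :=
  Classical.choose ((E.πH_eq (E.sec (E.πH f)) f).mp (E.sec_sec (E.πH f)))

/-- Membership in the vertex group `X_v` of the quotient graph of groups:
the stabilizer of the chosen lift `v^T`. -/
def InStab (v : E.X.V) (g : E.G) : Prop := E.actV g (E.vT v) = E.vT v

/-- A closed path of length `n` in the quotient graph of groups `𝕏 = Y ⫽ G`,
recorded cyclically: half-edges `h j` and group elements `γ j` (with `γ j` the group
element immediately preceding `h j`), each lying in the vertex group at the root of
`h j`. -/
def IsClosedGPath {n : ℕ} (h : ZMod n → E.X.H) (γ : ZMod n → E.G) : Prop :=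
  E.X.IsClosedPath h ∧ ∀ j, E.InStab (E.X.r (h j)) (γ j)

/-- The path `g₀h₁g₁⋯g_{n-1}h_n` is reduced if for every `j` either `h_{j+1} ≠ h̄_j`
or the intervening group element is nontrivial. -/
def IsReducedGPath {n : ℕ} (h : ZMod n → E.X.H) (γ : ZMod n → E.G) : Prop :=
  ∀ j, h (j + 1) ≠ E.X.bar (h j) ∨ γ (j + 1) ≠ 1

/-- A closed path in `𝕏` has period `d` if it is invariant under rotation by `d`. -/
def GPathHasPeriod {n : ℕ} (h : ZMod n → E.X.H) (γ : ZMod n → E.G) (d : ℕ) : Prop :=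
  ∀ j, h (j + (d : ZMod n)) = h j ∧ γ (j + (d : ZMod n)) = γ j

/-- A closed path in `𝕏` is primitive if it is not a proper power. -/
def GPathIsPrimitive {n : ℕ} (h : ZMod n → E.X.H) (γ : ZMod n → E.G) : Prop :=
  ∀ d : ℕ, 0 < d → d ∣ n → E.GPathHasPeriod h γ d → d = n

/-- The Frobenius element `F(P) = g₀F(h₁)g₁F(h₂)⋯g_{n-1}F(h_n)` of a closed path
in `𝕏` (with chosen basepoint). -/
def Frob {n : ℕ} (h : ZMod n → E.X.H) (γ : ZMod n → E.G) : E.G :=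
  (((List.range n).map fun i => γ (i : ZMod n) * E.F (h (i : ZMod n)))).prod

/-- The lift `π⁻¹(Q, s)` of a closed path `Q` in `𝕏` starting on the `s`-th sheet:
its `j`-th half-edge is `s · F(g₀h₁⋯h_j g_j) · h_{j+1}^S`. -/
def liftPath {n : ℕ} (h : ZMod n → E.X.H) (γ : ZMod n → E.G) (s : E.G)
    (j : ZMod n) : E.Y.H :=
  E.act (s * (((List.range j.val).map fun i => γ (i : ZMod n) * E.F (h (i : ZMod n)))).prod
      * γ j) (E.sec (h j))

/-- The half-edge components of the image `π(P)` of a closed path `P` in `Y`. -/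
def imgH {n : ℕ} (f : ZMod n → E.Y.H) (j : ZMod n) : E.X.H := E.πH (f j)

/-- The group components of the image `π(P)` of a closed path `P` in `Y`:
`g_j = F(h_j)⁻¹ N(f_j)⁻¹ N(f_{j+1})` (cyclically, with `g₀ = F(h_n)⁻¹N(f_n)⁻¹N(f₁)`). -/
noncomputable def imgG {n : ℕ} (f : ZMod n → E.Y.H) (j : ZMod n) : E.G :=
  (E.F (E.πH (f (j - 1))))⁻¹ * (E.N (f (j - 1)))⁻¹ * E.N (f j)

end EdgeFreeCover

namespace EdgeFreeCover

variable (E : EdgeFreeCover) {m : ℕ} (h : ZMod m → E.X.H) (γ : ZMod m → E.G)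

lemma act_cancel {g g' : E.G} {x : E.Y.H} (hgg : E.act g x = E.act g' x) : g = g' := by
  have h1 : E.act (g'⁻¹ * g) x = x := by
    rw [E.act_mul, hgg, ← E.act_mul, inv_mul_cancel, E.act_one]
  have := E.free _ _ h1
  rwa [inv_mul_eq_one, eq_comm] at this

lemma N_spec (x : E.Y.H) : E.act (E.N x) (E.sec (E.πH x)) = x :=
  Classical.choose_spec ((E.πH_eq (E.sec (E.πH x)) x).mp (E.sec_sec (E.πH x)))

/-- `t(b) = F(h_b) γ_{b+1}`. -/
def tf (b : ZMod m) : E.G := E.F (h b) * γ (b + 1)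

/-- `W(b,k) = ∏_{i<k} t(b+i)`. -/
def Wp (b : ZMod m) (k : ℕ) : E.G :=
  ((List.range k).map fun i => tf E h γ (b + i)).prod

/-- `PF(b,k) = ∏_{i<k} γ_{b+i} F(h_{b+i})`; the Frobenius based at `b` is `PF(b,m)`. -/
def PF (b : ZMod m) (k : ℕ) : E.G :=
  ((List.range k).map fun i => γ (b + i) * E.F (h (b + i))).prod

lemma Wp_succ (b : ZMod m) (k : ℕ) :
    Wp E h γ b (k + 1) = Wp E h γ b k * tf E h γ (b + k) := by
  simp [Wp, List.range_succ]

lemma PF_succ (b : ZMod m) (k : ℕ) :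
    PF E h γ b (k + 1) = PF E h γ b k * (γ (b + k) * E.F (h (b + k))) := by
  simp [PF, List.range_succ]

lemma Wp_add (b : ZMod m) (k₁ k₂ : ℕ) :
    Wp E h γ b (k₁ + k₂) = Wp E h γ b k₁ * Wp E h γ (b + k₁) k₂ := by
  induction k₂ with
  | zero => simp [Wp]
  | succ k ih =>
      rw [← Nat.add_assoc, Wp_succ, ih, Wp_succ, mul_assoc]
      congr 2
      push_cast
      ring

lemma Wp_pow (b : ZMod m) (e : ℕ) :
    Wp E h γ b (e * m) = (Wp E h γ b m) ^ e := by
  induction e with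
  | zero => simp [Wp]
  | succ e ih =>
      have : (e + 1) * m = e * m + m := by ring
      rw [this, Wp_add, ih, pow_succ]
      congr 2
      push_cast [ZMod.natCast_self]
      ring

lemma interleave (b : ZMod m) (k : ℕ) :
    γ b * Wp E h γ b k = PF E h γ b k * γ (b + k) := by
  induction k with
  | zero => simp [Wp, PF]
  | succ k ih =>
      rw [Wp_succ, PF_succ, ← mul_assoc, ih, tf]
      push_cast
      group

lemma PF_shift (k : ℕ) (b : ZMod m) :
    PF E h γ b (k + 1) = (γ b * E.F (h b)) * PF E h γ (b + 1) k := by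
  induction k generalizing b with
  | zero =>
      rw [PF_succ E h γ b 0]
      simp [PF]
  | succ k ih =>
      rw [PF_succ, ih, PF_succ, mul_assoc]
      congr 3 <;> · push_cast; ring

lemma PF_rot (hm : 0 < m) (b : ZMod m) :
    PF E h γ (b + 1) m = (γ b * E.F (h b))⁻¹ * PF E h γ b m * (γ b * E.F (h b)) := by
  obtain ⟨m', rfl⟩ : ∃ m', m = m' + 1 := ⟨m - 1, (Nat.succ_pred_eq_of_pos hm).symm⟩
  have hb : b + 1 + (m' : ZMod (m' + 1)) = b := by
    have : ((m' + 1 : ℕ) : ZMod (m' + 1)) = 0 := ZMod.natCast_self _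
    push_cast at this ⊢
    rw [add_assoc, add_comm (1 : ZMod (m' + 1)), this, add_zero]
  rw [PF_succ, hb, PF_shift]
  group

lemma PF_conj (hm : 0 < m) (k : ℕ) :
    ∃ x : E.G, PF E h γ ((k : ZMod m)) m = x⁻¹ * PF E h γ 0 m * x := by
  induction k with
  | zero => exact ⟨1, by simp⟩
  | succ k ih =>
      obtain ⟨x, hx⟩ := ih
      refine ⟨x * (γ (k : ZMod m) * E.F (h (k : ZMod m))), ?_⟩
      have : ((k + 1 : ℕ) : ZMod m) = (k : ZMod m) + 1 := by push_cast; ring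
      rw [this, PF_rot E h γ hm, hx]
      group

lemma Frob_eq_PF : E.Frob h γ = PF E h γ 0 m := by
  simp [Frob, PF]

end EdgeFreeCover

section AuxGroup

private lemma conj_pow_aux {G : Type*} [Group G] (x a : G) (k : ℕ) :
    (x⁻¹ * a * x) ^ k = x⁻¹ * a ^ k * x := by
  induction k with
  | zero => group
  | succ k ih => rw [pow_succ, ih, pow_succ]; group

private lemma conj_eq_one_aux {G : Type*} [Group G] {x a : G}
    (hh : x⁻¹ * a * x = 1) : a = 1 := by
  have : a = x * (x⁻¹ * a * x) * x⁻¹ := by group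
  rw [this, hh]; group

end AuxGroup

/-- Let `𝔮` be a prime of `𝕏 = Y ⫽ G` with representative `Q` (a
primitive closed reduced path of length `m`), and let `𝔭` be a prime of `Y` lying over
`𝔮`, represented by a primitive closed reduced path `P` of length `n` with
`π(P) = Q^f` (encoded via the reduction map `ZMod n → ZMod m`, `n = f·m`). Then the
residual degree `f` equals the order of the Frobenius element `F(Q)` in `G`, and hence
`ℓ(𝔭) = f(𝔮)·ℓ(𝔮)`. -/
theorem residual_degree_eq_orderOf_frobenius (E : EdgeFreeCover)
    (m f n : ℕ) (hm : 0 < m) (hf : 0 < f) (hn : n = f * m)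
    (hdvd : m ∣ n)
    (P : ZMod n → E.Y.H)
    (hPc : E.Y.IsClosedPath P) (hPr : E.Y.IsReducedPath P)
    (hPp : E.Y.IsPrimitive P)
    (h : ZMod m → E.X.H) (γ : ZMod m → E.G)
    (hQc : E.IsClosedGPath h γ) (hQr : E.IsReducedGPath h γ)
    (hQp : E.GPathIsPrimitive h γ)
    (himg : ∀ j : ZMod n,
      E.imgH P j = h (ZMod.castHom hdvd (ZMod m) j) ∧
      E.imgG P j = γ (ZMod.castHom hdvd (ZMod m) j)) :
    f = orderOf (E.Frob h γ) ∧ n = orderOf (E.Frob h γ) * m := by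
  classical
  have hn0 : 0 < n := hn ▸ Nat.mul_pos hf hm
  haveI : NeZero n := ⟨hn0.ne'⟩
  have hπ : ∀ j : ZMod n, E.πH (P j) = h (ZMod.castHom hdvd (ZMod m) j) :=
    fun j => (himg j).1
  have step : ∀ j : ZMod n, E.N (P (j + 1))
      = E.N (P j) * EdgeFreeCover.tf E h γ (ZMod.castHom hdvd (ZMod m) j) := by
    intro j
    have h2 := (himg (j + 1)).2
    rw [EdgeFreeCover.imgG, add_sub_cancel_right, hπ j, map_add, map_one] at h2
    rw [EdgeFreeCover.tf, ← h2]
    group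
  have iter : ∀ (k : ℕ) (j : ZMod n), E.N (P (j + (k : ZMod n)))
      = E.N (P j) * EdgeFreeCover.Wp E h γ (ZMod.castHom hdvd (ZMod m) j) k := by
    intro k
    induction k with
    | zero => intro j; simp [EdgeFreeCover.Wp]
    | succ k ih =>
        intro j
        have e1 : j + ((k + 1 : ℕ) : ZMod n) = (j + (k : ZMod n)) + 1 := by
          push_cast; ring
        have e2 : ZMod.castHom hdvd (ZMod m) (j + (k : ZMod n))
            = ZMod.castHom hdvd (ZMod m) j + (k : ZMod m) := by
          rw [map_add, map_natCast]
        rw [e1, step, ih, e2, EdgeFreeCover.Wp_succ, mul_assoc]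
  have hcj : ∀ j : ZMod n, ZMod.castHom hdvd (ZMod m) j = ((j.val : ℕ) : ZMod m) := by
    intro j
    rw [ZMod.castHom_apply, ← ZMod.natCast_val]
  have WmConj : ∀ j : ZMod n, ∃ y : E.G,
      EdgeFreeCover.Wp E h γ (ZMod.castHom hdvd (ZMod m) j) m
        = y⁻¹ * E.Frob h γ * y := by
    intro j
    obtain ⟨x, hx⟩ := EdgeFreeCover.PF_conj E h γ hm j.val
    have hb := EdgeFreeCover.interleave E h γ (ZMod.castHom hdvd (ZMod m) j) m
    rw [ZMod.natCast_self, add_zero] at hb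
    refine ⟨x * γ (ZMod.castHom hdvd (ZMod m) j), ?_⟩
    have hWeq : EdgeFreeCover.Wp E h γ (ZMod.castHom hdvd (ZMod m) j) m
        = (γ (ZMod.castHom hdvd (ZMod m) j))⁻¹
          * (EdgeFreeCover.PF E h γ (ZMod.castHom hdvd (ZMod m) j) m
            * γ (ZMod.castHom hdvd (ZMod m) j)) := by
      rw [← hb]; group
    rw [hWeq]
    conv_lhs => rw [hcj j, hx, ← hcj j, ← EdgeFreeCover.Frob_eq_PF E h γ]
    group
  have hFrobf : (E.Frob h γ) ^ f = 1 := by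
    obtain ⟨y, hy⟩ := WmConj 0
    have h1 := iter n 0
    rw [ZMod.natCast_self, add_zero] at h1
    have h2 : EdgeFreeCover.Wp E h γ (ZMod.castHom hdvd (ZMod m) 0) n = 1 :=
      left_eq_mul.mp h1
    have h3 : EdgeFreeCover.Wp E h γ (ZMod.castHom hdvd (ZMod m) 0) (f * m) = 1 := by
      rw [← hn]; exact h2
    rw [EdgeFreeCover.Wp_pow, hy, conj_pow_aux] at h3
    exact conj_eq_one_aux h3
  have hef : orderOf (E.Frob h γ) ∣ f := orderOf_dvd_of_pow_eq_one hFrobf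
  have he0 : 0 < orderOf (E.Frob h γ) := orderOf_pos _
  have hper : E.Y.HasPeriod P (orderOf (E.Frob h γ) * m) := by
    intro j
    obtain ⟨y, hy⟩ := WmConj j
    have hW : EdgeFreeCover.Wp E h γ (ZMod.castHom hdvd (ZMod m) j)
        (orderOf (E.Frob h γ) * m) = 1 := by
      rw [EdgeFreeCover.Wp_pow, hy, conj_pow_aux, pow_orderOf_eq_one]
      group
    have hN : E.N (P (j + ((orderOf (E.Frob h γ) * m : ℕ) : ZMod n))) = E.N (P j) := by
      rw [iter, hW, mul_one]
    have hcem : ZMod.castHom hdvd (ZMod m) (j + ((orderOf (E.Frob h γ) * m : ℕ) : ZMod n))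
        = ZMod.castHom hdvd (ZMod m) j := by
      rw [map_add, map_natCast, Nat.cast_mul, ZMod.natCast_self, mul_zero, add_zero]
    have hH : E.πH (P (j + ((orderOf (E.Frob h γ) * m : ℕ) : ZMod n))) = E.πH (P j) := by
      rw [hπ, hπ, hcem]
    calc P (j + ((orderOf (E.Frob h γ) * m : ℕ) : ZMod n))
        = E.act (E.N (P (j + ((orderOf (E.Frob h γ) * m : ℕ) : ZMod n))))
            (E.sec (E.πH (P (j + ((orderOf (E.Frob h γ) * m : ℕ) : ZMod n))))) :=
          (E.N_spec _).symm
      _ = E.act (E.N (P j)) (E.sec (E.πH (P j))) := by rw [hN, hH]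
      _ = P j := E.N_spec _
  have hdvd' : orderOf (E.Frob h γ) * m ∣ n := hn ▸ Nat.mul_dvd_mul_right hef m
  have hEq : orderOf (E.Frob h γ) * m = n :=
    hPp _ (Nat.mul_pos he0 hm) hdvd' hper
  have hef' : orderOf (E.Frob h γ) = f :=
    Nat.eq_of_mul_eq_mul_right hm (hEq.trans hn)
  exact ⟨hef'.symm, by rw [hn, hef']⟩
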